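/- arXiv:2401.07522 — 3 statements merged into one kernel-verified Lean document; each statement's English description precedes it below -/
import Mathlib

section
/- Under the smoothness assumptions on the taper h (symmetric, supported on [−1/2,1/2], twice differentiable on ℝ), there is a constant C such that for all λ > 0 and all m ∈ ℤ, ∫_ℝ |B_λ(u) B_λ(ω_m − u) · u| du ≤ C and ∫_ℝ |B_λ(u) B_λ(ω_m − u) · u²| du ≤ C/λ. -/
open MeasureTheory Real

/-- The frequency window `B_λ(u) = ∫_{−λ/2}^{λ/2} h(s/λ) exp(−i s u) ds` of a taper `h`. -/
noncomputable def freqWindow (h : ℝ → ℝ) (lam : ℝ) (u : ℝ) : ℂ :=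
  ∫ s in (-(lam / 2))..(lam / 2),
    (h (s / lam) : ℂ) * Complex.exp (-(Complex.I * (s : ℂ) * (u : ℂ)))

/-- A continuous function vanishing for `1/2 < |x|` also vanishes for `1/2 ≤ |x|`. -/
private lemma vanish_at_half {f : ℝ → ℝ} (hc : Continuous f)
    (h0 : ∀ x : ℝ, 1/2 < |x| → f x = 0) : ∀ x : ℝ, 1/2 ≤ |x| → f x = 0 := by
  intro x hx
  rcases lt_or_eq_of_le hx with hlt | heq
  · exact h0 x hlt
  · rcases (abs_eq (by norm_num : (0:ℝ) ≤ 1/2)).mp heq.symm with h1 | h1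
    · subst h1
      have t1 : Filter.Tendsto f (nhdsWithin (1/2) (Set.Ioi (1/2))) (nhds (f (1/2))) :=
        (hc.tendsto _).mono_left nhdsWithin_le_nhds
      have t2 : Filter.Tendsto f (nhdsWithin (1/2 : ℝ) (Set.Ioi (1/2))) (nhds 0) := by
        refine Filter.Tendsto.congr' ?_ tendsto_const_nhds
        filter_upwards [self_mem_nhdsWithin] with y hy
        exact (h0 y (lt_of_lt_of_le (Set.mem_Ioi.mp hy) (le_abs_self y))).symm
      exact tendsto_nhds_unique t1 t2
    · subst h1
      have t1 : Filter.Tendsto f (nhdsWithin (-(1/2)) (Set.Iio (-(1/2)))) (nhds (f (-(1/2)))) :=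
        (hc.tendsto _).mono_left nhdsWithin_le_nhds
      have t2 : Filter.Tendsto f (nhdsWithin (-(1/2) : ℝ) (Set.Iio (-(1/2)))) (nhds 0) := by
        refine Filter.Tendsto.congr' ?_ tendsto_const_nhds
        filter_upwards [self_mem_nhdsWithin] with y hy
        have hy' : y < -(1/2) := Set.mem_Iio.mp hy
        exact (h0 y (by rw [abs_of_neg (by linarith)]; linarith)).symm
      exact (tendsto_nhds_unique t1 t2)

/-- One integration by parts for the windowed Fourier-type integral. -/
private lemma ibp_step {f f' : ℝ → ℝ} (hf : ∀ x, HasDerivAt f (f' x) x)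
    (hf'c : Continuous f') (hb : f (1/2) = 0) (ha : f (-(1/2)) = 0)
    {lam : ℝ} (hlam : 0 < lam) {c : ℂ} (hc : c ≠ 0) :
    (∫ s in (-(lam/2))..(lam/2), (f (s/lam) : ℂ) * Complex.exp (c * s))
      = -(1/((lam:ℂ)*c)) *
        ∫ s in (-(lam/2))..(lam/2), (f' (s/lam) : ℂ) * Complex.exp (c * s) := by
  have hlam0 : lam ≠ 0 := hlam.ne'
  have hlamC : (lam:ℂ) ≠ 0 := Complex.ofReal_ne_zero.mpr hlam0
  set a : ℝ := -(lam/2)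
  set b : ℝ := lam/2
  have hU : ∀ x ∈ Set.uIcc a b, HasDerivAt (fun s : ℝ => ((f (s/lam) : ℝ) : ℂ))
      (((f' (x/lam) / lam : ℝ) : ℂ)) x := by
    intro x _
    have h1 : HasDerivAt (fun s : ℝ => f (s/lam)) (f' (x/lam) * (1/lam)) x := by
      have := (hf (x/lam)).comp x ((hasDerivAt_id x).div_const lam)
      exact this
    have := h1.ofReal_comp
    simpa [div_eq_mul_inv] using this
  have hV : ∀ x ∈ Set.uIcc a b, HasDerivAt (fun s : ℝ => Complex.exp (c * s) / c)
      (Complex.exp (c * x)) x := by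
    intro x _
    have h1 : HasDerivAt (fun s : ℝ => ((s : ℝ) : ℂ)) 1 x := by
      simpa using (hasDerivAt_id x).ofReal_comp
    have h2 : HasDerivAt (fun s : ℝ => c * ((s : ℝ) : ℂ)) c x := by
      simpa using h1.const_mul c
    have h3 := h2.cexp.div_const c
    simpa [mul_div_cancel_right₀ _ hc] using h3
  have hU'int : IntervalIntegrable (fun x : ℝ => ((f' (x/lam) / lam : ℝ) : ℂ)) volume a b := by
    apply Continuous.intervalIntegrable
    exact Complex.continuous_ofReal.comp ((hf'c.comp (continuous_id.div_const lam)).div_const lam)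
  have hV'int : IntervalIntegrable (fun x : ℝ => Complex.exp (c * x)) volume a b := by
    apply Continuous.intervalIntegrable
    exact Complex.continuous_exp.comp (continuous_const.mul Complex.continuous_ofReal)
  have key := intervalIntegral.integral_mul_deriv_eq_deriv_mul hU hV hU'int hV'int
  have hba : b / lam = 1/2 := by field_simp; ring
  have haa : a / lam = -(1/2) := by field_simp [a]; ring
  rw [hba, haa, hb, ha] at key
  simp only [Complex.ofReal_zero, zero_mul, sub_zero, zero_sub] at key
  rw [key]
  rw [← intervalIntegral.integral_const_mul, ← intervalIntegral.integral_neg]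
  apply intervalIntegral.integral_congr
  intro x _
  push_cast
  field_simp
  try ring

/-- Under the smoothness assumptions on the taper `h` (nonnegative, symmetric, supported on
`[−1/2,1/2]`, twice differentiable on `ℝ`), there is a constant `C` such that for all `λ > 0`
and all `m ∈ ℤ`, `∫_ℝ |B_λ(u) B_λ(ω_m − u) · u| du ≤ C` and
`∫_ℝ |B_λ(u) B_λ(ω_m − u) · u²| du ≤ C/λ`, where `ω_m = 2πm/λ`. -/
theorem freqWindow_abs_weighted_convolution_bound (h : ℝ → ℝ)
    (hnn : ∀ s, 0 ≤ h s)
    (hsym : ∀ s, h (-s) = h s)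
    (hsupp : ∀ s, s ∉ Set.Icc (-(1/2) : ℝ) (1/2) → h s = 0)
    (hsm : ContDiff ℝ 2 h) :
    ∃ C : ℝ, 0 < C ∧ ∀ lam : ℝ, 0 < lam → ∀ m : ℤ,
      (∫ u : ℝ, ‖freqWindow h lam u * freqWindow h lam (2 * Real.pi * m / lam - u)‖ * |u|)
        ≤ C ∧
      (∫ u : ℝ, ‖freqWindow h lam u * freqWindow h lam (2 * Real.pi * m / lam - u)‖ * u ^ 2)
        ≤ C / lam := by
  classical
  -- basic differentiability facts
  have hdiff : Differentiable ℝ h := hsm.differentiable (by norm_num)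
  have hcont : Continuous h := hdiff.continuous
  have hsm1 : ContDiff ℝ 1 (deriv h) := by
    have h2 : ContDiff ℝ ((1 : ℕ) + 1) h := by exact_mod_cast hsm
    exact (contDiff_succ_iff_deriv.mp h2).2.2
  have hdiff1 : Differentiable ℝ (deriv h) := hsm1.differentiable one_ne_zero
  have hcont1 : Continuous (deriv h) := hdiff1.continuous
  have hcont2 : Continuous (deriv (deriv h)) := hsm1.continuous_deriv le_rfl
  have hd : ∀ x, HasDerivAt h (deriv h x) x := fun x => (hdiff x).hasDerivAt
  have hd1 : ∀ x, HasDerivAt (deriv h) (deriv (deriv h) x) x := fun x => (hdiff1 x).hasDerivAt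
  -- vanishing at the boundary
  have hzero : ∀ x : ℝ, 1/2 < |x| → h x = 0 := by
    intro x hx
    apply hsupp
    intro hmem
    rcases Set.mem_Icc.mp hmem with ⟨h1, h2⟩
    have := abs_le.mpr ⟨by linarith, h2⟩
    linarith
  have hIcc0 : ∀ x : ℝ, 1/2 ≤ |x| → h x = 0 := vanish_at_half hcont hzero
  have hzero1 : ∀ x : ℝ, 1/2 < |x| → deriv h x = 0 := by
    intro x hx
    have hopen : IsOpen {y : ℝ | 1/2 < |y|} := isOpen_lt continuous_const continuous_abs
    have hev : h =ᶠ[nhds x] (fun _ => (0:ℝ)) :=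
      Filter.eventuallyEq_of_mem (hopen.mem_nhds hx) (fun y hy => hzero y hy)
    rw [hev.deriv_eq]
    simp
  have hIcc1 : ∀ x : ℝ, 1/2 ≤ |x| → deriv h x = 0 := vanish_at_half hcont1 hzero1
  -- bounds on h and its second derivative on [-1/2, 1/2]
  obtain ⟨M0, hM0⟩ := (isCompact_Icc (a := (-(1/2) : ℝ)) (b := 1/2)).exists_bound_of_continuousOn
    hcont.continuousOn
  obtain ⟨M2, hM2⟩ := (isCompact_Icc (a := (-(1/2) : ℝ)) (b := 1/2)).exists_bound_of_continuousOn
    hcont2.continuousOn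
  have hM0nn : 0 ≤ M0 := le_trans (norm_nonneg _) (hM0 0 (by constructor <;> norm_num))
  have hM2nn : 0 ≤ M2 := le_trans (norm_nonneg _) (hM2 0 (by constructor <;> norm_num))
  set A : ℝ := M0 + 1 with hAdef
  set D : ℝ := M2 + 1 with hDdef
  have hA : 0 < A := by positivity
  have hD : 0 < D := by positivity
  have hAbd : ∀ x ∈ Set.Icc (-(1/2) : ℝ) (1/2), |h x| ≤ A := fun x hx =>
    le_trans (hM0 x hx) (by simp [hAdef])
  have hDbd : ∀ x ∈ Set.Icc (-(1/2) : ℝ) (1/2), |deriv (deriv h) x| ≤ D := fun x hx =>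
    le_trans (hM2 x hx) (by simp [hDdef])
  set S : ℝ := Real.sqrt (A * D) with hSdef
  have hSnn : 0 ≤ S := Real.sqrt_nonneg _
  refine ⟨(S + D) * ((A + D) * Real.pi) + 1, by positivity, ?_⟩
  intro lam hlam m
  have hlam0 : lam ≠ 0 := hlam.ne'
  set ω : ℝ := 2 * Real.pi * m / lam with hωdef
  set B : ℝ → ℂ := freqWindow h lam with hBdef
  -- membership
  have hmem : ∀ s ∈ Set.uIoc (-(lam/2)) (lam/2), s / lam ∈ Set.Icc (-(1/2) : ℝ) (1/2) := by
    intro s hs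
    rw [Set.uIoc_of_le (by linarith : -(lam/2) ≤ lam/2)] at hs
    rcases hs with ⟨h1, h2⟩
    constructor
    · rw [le_div_iff₀ hlam]; linarith
    · rw [div_le_iff₀ hlam]; linarith
  -- trivial bound
  have hexp : ∀ s u : ℝ, ‖Complex.exp (-(Complex.I * (s:ℂ) * (u:ℂ)))‖ = 1 := by
    intro s u
    rw [Complex.norm_exp]
    have : (-(Complex.I * (s:ℂ) * (u:ℂ))).re = 0 := by simp
    rw [this, Real.exp_zero]
  have bound1 : ∀ u : ℝ, ‖B u‖ ≤ A * lam := by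
    intro u
    have := intervalIntegral.norm_integral_le_of_norm_le_const (C := A)
      (f := fun s : ℝ => (h (s / lam) : ℂ) * Complex.exp (-(Complex.I * (s:ℂ) * (u:ℂ))))
      (a := -(lam/2)) (b := lam/2) (by
        intro s hs
        rw [norm_mul, hexp, mul_one, Complex.norm_real]
        exact hAbd _ (hmem s hs))
    have habs : |lam/2 - -(lam/2)| = lam := by
      rw [abs_of_pos (by linarith)]; ring
    calc ‖B u‖ ≤ A * |lam/2 - -(lam/2)| := this
      _ = A * lam := by rw [habs]
  -- second-derivative bound
  have bound2 : ∀ u : ℝ, ‖B u‖ * u ^ 2 ≤ D / lam := by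
    intro u
    rcases eq_or_ne u 0 with rfl | hu
    · simp; positivity
    · set c : ℂ := -(Complex.I * (u:ℂ)) with hcdef
      have hc : c ≠ 0 := by
        simp only [hcdef, neg_ne_zero]
        exact mul_ne_zero Complex.I_ne_zero (Complex.ofReal_ne_zero.mpr hu)
      have e1 : B u = ∫ s in (-(lam/2))..(lam/2), (h (s/lam) : ℂ) * Complex.exp (c * s) := by
        rw [hBdef]
        unfold freqWindow
        apply intervalIntegral.integral_congr
        intro s _
        show (h (s/lam) : ℂ) * Complex.exp (-(Complex.I * (s:ℂ) * (u:ℂ)))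
          = (h (s/lam) : ℂ) * Complex.exp (c * s)
        rw [show -(Complex.I * (s:ℂ) * (u:ℂ)) = c * s by rw [hcdef]; ring]
      have key : B u = (-(1/((lam:ℂ)*c))) * ((-(1/((lam:ℂ)*c))) *
          ∫ s in (-(lam/2))..(lam/2), ((deriv (deriv h) (s/lam) : ℝ) : ℂ) * Complex.exp (c * s)) := by
        rw [e1, ibp_step hd hcont1 (hIcc0 _ (le_abs_self _))
          (hIcc0 _ (by rw [abs_neg]; exact le_abs_self _)) hlam hc,
          ibp_step hd1 hcont2 (hIcc1 _ (le_abs_self _))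
          (hIcc1 _ (by rw [abs_neg]; exact le_abs_self _)) hlam hc]
      have hnormc : ‖c‖ = |u| := by
        rw [hcdef, norm_neg, norm_mul, Complex.norm_I, one_mul, Complex.norm_real]
        rfl
      have hint_bd : ‖∫ s in (-(lam/2))..(lam/2),
          ((deriv (deriv h) (s/lam) : ℝ) : ℂ) * Complex.exp (c * s)‖ ≤ D * lam := by
        have hexpc : ∀ s : ℝ, ‖Complex.exp (c * s)‖ = 1 := by
          intro s
          rw [Complex.norm_exp]
          have : (c * (s:ℂ)).re = 0 := by simp [hcdef]
          rw [this, Real.exp_zero]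
        have := intervalIntegral.norm_integral_le_of_norm_le_const (C := D)
          (f := fun s : ℝ => ((deriv (deriv h) (s/lam) : ℝ) : ℂ) * Complex.exp (c * s))
          (a := -(lam/2)) (b := lam/2) (by
            intro s hs
            rw [norm_mul, hexpc, mul_one, Complex.norm_real]
            exact hDbd _ (hmem s hs))
        have habs : |lam/2 - -(lam/2)| = lam := by rw [abs_of_pos (by linarith)]; ring
        calc _ ≤ D * |lam/2 - -(lam/2)| := this
          _ = D * lam := by rw [habs]
      have hnn : ‖-(1/((lam:ℂ)*c))‖ = 1 / (lam * |u|) := by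
        rw [norm_neg, norm_div, norm_one, norm_mul, hnormc, Complex.norm_real,
          Real.norm_of_nonneg hlam.le]
      calc ‖B u‖ * u ^ 2
          = (1/(lam*|u|)) * ((1/(lam*|u|)) * ‖∫ s in (-(lam/2))..(lam/2),
              ((deriv (deriv h) (s/lam) : ℝ) : ℂ) * Complex.exp (c * s)‖) * u ^ 2 := by
            rw [key, norm_mul, norm_mul, hnn]
        _ ≤ (1/(lam*|u|)) * ((1/(lam*|u|)) * (D * lam)) * u ^ 2 := by
            have hpos : (0:ℝ) < 1/(lam*|u|) := by positivity
            gcongr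
        _ = D / lam := by
            have h1 : |u| ≠ 0 := abs_ne_zero.mpr hu
            have h2 : |u|^2 = u^2 := sq_abs u
            have h3 : lam * |u| * (lam * |u|) = u^2 * lam^2 := by
              rw [show lam * |u| * (lam * |u|) = |u|^2 * lam^2 by ring, sq_abs]
            field_simp
            rw [h2]
  -- combined majorant
  have bound3 : ∀ u : ℝ, ‖B u‖ ≤ (A + D) * lam * (1 + (lam*u)^2)⁻¹ := by
    intro u
    rw [← div_eq_mul_inv, le_div_iff₀ (by positivity)]
    have e : ‖B u‖ * (1 + (lam*u)^2) = ‖B u‖ + (‖B u‖ * u^2) * lam^2 := by ring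
    have t : (‖B u‖ * u^2) * lam^2 ≤ (D/lam) * lam^2 :=
      mul_le_mul_of_nonneg_right (bound2 u) (sq_nonneg _)
    have t2 : (D/lam) * lam^2 = D * lam := by field_simp
    rw [e]
    calc ‖B u‖ + ‖B u‖ * u^2 * lam^2 ≤ A * lam + (D/lam) * lam^2 := add_le_add (bound1 u) t
      _ = (A + D) * lam := by field_simp
  have bound4 : ∀ u : ℝ, ‖B u‖ * |u| ≤ S := by
    intro u
    rw [hSdef, Real.le_sqrt (by positivity) (by positivity)]
    have e : (‖B u‖ * |u|)^2 = ‖B u‖ * (‖B u‖ * u^2) := by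
      rw [mul_pow, sq_abs]; ring
    have t : ‖B u‖ * (‖B u‖ * u^2) ≤ (A * lam) * (D / lam) :=
      mul_le_mul (bound1 u) (bound2 u) (by positivity) (by positivity)
    have t2 : (A * lam) * (D / lam) = A * D := by field_simp
    rw [e]; exact le_trans t (le_of_eq t2)
  -- continuity of B
  have hBc : Continuous B := by
    rw [hBdef]
    unfold freqWindow
    apply intervalIntegral.continuous_parametric_intervalIntegral_of_continuous'
    apply Continuous.mul
    · exact Complex.continuous_ofReal.comp (hcont.comp (continuous_snd.div_const lam))
    · exact Complex.continuous_exp.comp (by fun_prop)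
  -- the majorant and its integral
  set Φ : ℝ → ℝ := fun u => (A + D) * lam * (1 + (lam*u)^2)⁻¹ with hΦdef
  have hΦint : Integrable Φ :=
    (integrable_inv_one_add_sq.comp_mul_left' hlam0).const_mul _
  have hΦval : ∫ u, Φ u = (A + D) * Real.pi := by
    rw [hΦdef]
    rw [MeasureTheory.integral_const_mul]
    rw [MeasureTheory.Measure.integral_comp_mul_left (fun x : ℝ => (1 + x^2)⁻¹) lam]
    rw [integral_univ_inv_one_add_sq, smul_eq_mul, abs_inv, abs_of_pos hlam]
    field_simp
    try ring
  have hΦnn : ∀ u, 0 ≤ Φ u := fun u => by rw [hΦdef]; positivity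
  have hΦω : Integrable (fun u => Φ (ω - u)) := hΦint.comp_sub_left ω
  have hΦωval : ∫ u, Φ (ω - u) = (A + D) * Real.pi := by
    rw [integral_sub_left_eq_self Φ volume ω, hΦval]
  have hBωbd : ∀ u : ℝ, ‖B (ω - u)‖ ≤ Φ (ω - u) := fun u => bound3 (ω - u)
  have hπnn : 0 ≤ (A + D) * Real.pi := by positivity
  constructor
  · -- first integral
    set F1 : ℝ → ℝ := fun u => ‖B u * B (ω - u)‖ * |u| with hF1def
    have hF1c : Continuous F1 := by
      rw [hF1def]
      exact ((hBc.mul (hBc.comp (continuous_const.sub continuous_id))).norm).mul continuous_abs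
    have hF1bd : ∀ u, F1 u ≤ S * Φ (ω - u) := by
      intro u
      show ‖B u * B (ω - u)‖ * |u| ≤ S * Φ (ω - u)
      have e : ‖B u * B (ω - u)‖ * |u| = (‖B u‖ * |u|) * ‖B (ω - u)‖ := by
        rw [norm_mul]; ring
      rw [e]
      exact mul_le_mul (bound4 u) (hBωbd u) (norm_nonneg _) hSnn
    have hF1int : Integrable F1 := by
      apply (hΦω.const_mul S).mono' hF1c.aestronglyMeasurable
      filter_upwards with u
      rw [Real.norm_of_nonneg (show (0:ℝ) ≤ F1 u from by
        show (0:ℝ) ≤ ‖B u * B (ω - u)‖ * |u|; positivity)]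
      exact hF1bd u
    calc ∫ u, F1 u ≤ ∫ u, S * Φ (ω - u) :=
          integral_mono hF1int (hΦω.const_mul S) hF1bd
      _ = S * ((A + D) * Real.pi) := by rw [MeasureTheory.integral_const_mul, hΦωval]
      _ ≤ (S + D) * ((A + D) * Real.pi) + 1 := by nlinarith [hD.le, hπnn, hSnn]
  · -- second integral
    set F2 : ℝ → ℝ := fun u => ‖B u * B (ω - u)‖ * u ^ 2 with hF2def
    have hF2c : Continuous F2 := by
      rw [hF2def]
      exact ((hBc.mul (hBc.comp (continuous_const.sub continuous_id))).norm).mul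
        (continuous_pow 2)
    have hF2bd : ∀ u, F2 u ≤ (D / lam) * Φ (ω - u) := by
      intro u
      show ‖B u * B (ω - u)‖ * u ^ 2 ≤ (D / lam) * Φ (ω - u)
      have e : ‖B u * B (ω - u)‖ * u ^ 2 = (‖B u‖ * u ^ 2) * ‖B (ω - u)‖ := by
        rw [norm_mul]; ring
      rw [e]
      exact mul_le_mul (bound2 u) (hBωbd u) (norm_nonneg _) (by positivity)
    have hF2int : Integrable F2 := by
      apply (hΦω.const_mul (D / lam)).mono' hF2c.aestronglyMeasurable
      filter_upwards with u
      rw [Real.norm_of_nonneg (show (0:ℝ) ≤ F2 u from by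
        show (0:ℝ) ≤ ‖B u * B (ω - u)‖ * u ^ 2; positivity)]
      exact hF2bd u
    calc ∫ u, F2 u ≤ ∫ u, (D / lam) * Φ (ω - u) :=
          integral_mono hF2int (hΦω.const_mul _) hF2bd
      _ = (D / lam) * ((A + D) * Real.pi) := by rw [MeasureTheory.integral_const_mul, hΦωval]
      _ = (D * ((A + D) * Real.pi)) / lam := by ring
      _ ≤ ((S + D) * ((A + D) * Real.pi) + 1) / lam := by
          rw [div_le_div_iff_of_pos_right hlam]
          nlinarith [mul_nonneg hSnn hπnn]
end

section
/- Let f: ℝ → ℝ be twice differentiable with |f|, |f'|, |f''| all bounded by β_{1+δ} for some δ > 0. Then uniformly over u, v ∈ ℝ and a ∈ ℕ, the midpoint Riemann sum error satisfies |(2π/λ) ∑_{k=−a}^{a−1} f(ω̃_k − u) f(ω̃_k − v) − ∫_{−2πa/λ}^{2πa/λ} f(ω−u) f(ω−v) dω| ≤ C/λ², where ω̃_k = 2πk/λ + π/λ are the shifted (midpoint) Fourier frequencies. -/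
open MeasureTheory Real
open Set

/-- `β_δ(ω) = C` for `|ω| ≤ 1` and `C·|ω|^{−δ}` for `|ω| > 1`. -/
noncomputable def betaFun (C δ : ℝ) (ω : ℝ) : ℝ :=
  if |ω| ≤ 1 then C else C * |ω| ^ (-δ)

lemma betaFun_nonneg {C δ : ℝ} (hC : 0 ≤ C) (ω : ℝ) : 0 ≤ betaFun C δ ω := by
  unfold betaFun
  split
  · exact hC
  · exact mul_nonneg hC (Real.rpow_nonneg (abs_nonneg _) _)

lemma betaFun_le {C δ : ℝ} (hC : 0 ≤ C) (hδ : 0 ≤ δ) (ω : ℝ) : betaFun C δ ω ≤ C := by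
  unfold betaFun
  split_ifs with h
  · exact le_rfl
  · push_neg at h
    calc C * |ω| ^ (-δ) ≤ C * 1 := by
          apply mul_le_mul_of_nonneg_left _ hC
          exact Real.rpow_le_one_of_one_le_of_nonpos h.le (neg_nonpos.mpr hδ)
      _ = C := mul_one C

lemma betaFun_measurable (C δ : ℝ) : Measurable (betaFun C δ) := by
  unfold betaFun
  apply Measurable.ite (measurableSet_le (continuous_abs.measurable) measurable_const)
    measurable_const
  fun_prop

lemma betaFun_integrable {C δ : ℝ} (hC : 0 < C) (hδ : 0 < δ) :
    Integrable (betaFun C (1 + δ)) := by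
  have hmeas := betaFun_measurable C (1 + δ)
  have hIoi : IntegrableOn (betaFun C (1 + δ)) (Ioi 1) := by
    have h1 : IntegrableOn (fun x : ℝ => C * x ^ (-(1 + δ))) (Ioi 1) :=
      (integrableOn_Ioi_rpow_of_lt (by linarith) one_pos).const_mul C
    apply h1.congr_fun _ measurableSet_Ioi
    intro x hx
    simp only [mem_Ioi] at hx
    unfold betaFun
    rw [if_neg (by rw [abs_of_pos (by linarith)]; linarith), abs_of_pos (by linarith)]
  have hIio : IntegrableOn (betaFun C (1 + δ)) (Iio (-1)) := by
    have h2 := (MeasurePreserving.integrableOn_comp_preimage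
      (Measure.measurePreserving_neg (volume : Measure ℝ))
      (Homeomorph.neg ℝ).measurableEmbedding).2 hIoi
    have hpre : (Neg.neg ⁻¹' Ioi (1:ℝ) : Set ℝ) = Iio (-1) := by
      ext x; simp [lt_neg]
    have hcomp : (betaFun C (1 + δ) ∘ Neg.neg) = betaFun C (1 + δ) := by
      funext x; unfold betaFun; simp [abs_neg]
    rwa [hpre, hcomp] at h2
  have hIcc : IntegrableOn (betaFun C (1 + δ)) (Icc (-1) 1) := by
    apply Measure.integrableOn_of_bounded (M := C) (by simp) hmeas.aestronglyMeasurable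
    filter_upwards with x
    rw [Real.norm_eq_abs, abs_of_nonneg (betaFun_nonneg hC.le x)]
    exact betaFun_le hC.le (by linarith) x
  have hun : IntegrableOn (betaFun C (1 + δ)) (Iio (-1) ∪ (Icc (-1) 1 ∪ Ioi 1)) :=
    hIio.union (hIcc.union hIoi)
  rw [← integrableOn_univ]
  apply hun.mono_set
  intro x _
  by_cases h1 : x < -1
  · exact Or.inl h1
  · push_neg at h1
    by_cases h2 : x ≤ 1
    · exact Or.inr (Or.inl ⟨h1, h2⟩)
    · push_neg at h2
      exact Or.inr (Or.inr h2)

lemma midpoint_step (g g1 g2 : ℝ → ℝ)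
    (hg : ∀ x, HasDerivAt g (g1 x) x) (hg1 : ∀ x, HasDerivAt g1 (g2 x) x)
    (hg2i : ∀ x y : ℝ, IntervalIntegrable g2 volume x y) (x h : ℝ) (hh : 0 < h) :
    |h * g (x + h / 2) - ∫ t in x..(x + h), g t| ≤
      h ^ 2 / 2 * ∫ t in x..(x + h), |g2 t| := by
  set m := x + h / 2 with hm_def
  have hcontg : Continuous g := by
    have : Differentiable ℝ g := fun s => (hg s).differentiableAt
    exact this.continuous
  have hgi : IntervalIntegrable g volume x (x + h) := hcontg.intervalIntegrable _ _
  have habs : IntervalIntegrable (fun t => |g2 t|) volume x (x + h) := (hg2i x (x + h)).abs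
  set V := ∫ t in x..(x + h), |g2 t| with hVdef
  have hV0 : 0 ≤ V := intervalIntegral.integral_nonneg (by linarith) fun t _ => abs_nonneg _
  have hm : m ∈ Icc x (x + h) := ⟨by simp [hm_def]; linarith, by simp [hm_def]; linarith⟩
  have hft : ∀ s1 s2 : ℝ, (∫ r in s1..s2, g2 r) = g1 s2 - g1 s1 := fun s1 s2 =>
    intervalIntegral.integral_eq_sub_of_hasDerivAt (fun r _ => hg1 r) (hg2i s1 s2)
  have hbound : ∀ t ∈ Icc x (x + h), |g1 t - g1 m| ≤ V := by
    intro t ht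
    rcases le_total m t with hmt | htm
    · rw [← hft m t]
      calc |∫ r in m..t, g2 r| ≤ ∫ r in m..t, |g2 r| :=
            intervalIntegral.abs_integral_le_integral_abs hmt
        _ ≤ V := intervalIntegral.integral_mono_interval hm.1 hmt ht.2
            (Filter.Eventually.of_forall fun r => abs_nonneg _) habs
    · have h2 : g1 t - g1 m = -∫ r in t..m, g2 r := by rw [hft t m]; ring
      rw [h2, abs_neg]
      calc |∫ r in t..m, g2 r| ≤ ∫ r in t..m, |g2 r| :=
            intervalIntegral.abs_integral_le_integral_abs htm
        _ ≤ V := intervalIntegral.integral_mono_interval ht.1 htm hm.2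
            (Filter.Eventually.of_forall fun r => abs_nonneg _) habs
  have hMVT : ∀ t ∈ Icc x (x + h), |g t - g m - g1 m * (t - m)| ≤ V * |t - m| := by
    intro t ht
    have hderiv : ∀ s ∈ Icc x (x + h),
        HasDerivWithinAt (fun r => g r - g1 m * r) (g1 s - g1 m) (Icc x (x + h)) s := by
      intro s _
      have := (hg s).sub (((hasDerivAt_id s).const_mul (g1 m)))
      exact this.hasDerivWithinAt.congr_deriv (by ring)
    have key := (convex_Icc x (x + h)).norm_image_sub_le_of_norm_hasDerivWithin_le hderiv
      (fun s hs => by rw [Real.norm_eq_abs]; exact hbound s hs) hm ht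
    rw [Real.norm_eq_abs, Real.norm_eq_abs] at key
    calc |g t - g m - g1 m * (t - m)| = |(g t - g1 m * t) - (g m - g1 m * m)| := by ring_nf
      _ ≤ V * |t - m| := key
  have htm_le : ∀ t ∈ Icc x (x + h), |t - m| ≤ h / 2 := by
    intro t ht
    rw [abs_le]
    constructor <;> [skip; skip] <;> simp [hm_def] at ht ⊢ <;> linarith [ht.1, ht.2]
  have hptwise : ∀ t ∈ Set.uIoc x (x + h), |g m + g1 m * (t - m) - g t| ≤ V * (h / 2) := by
    intro t ht
    have ht' : t ∈ Icc x (x + h) := by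
      rw [Set.uIoc_of_le (by linarith)] at ht
      exact ⟨ht.1.le, ht.2⟩
    calc |g m + g1 m * (t - m) - g t| = |g t - g m - g1 m * (t - m)| := by
          rw [abs_sub_comm]; ring_nf
      _ ≤ V * |t - m| := hMVT t ht'
      _ ≤ V * (h / 2) := mul_le_mul_of_nonneg_left (htm_le t ht') hV0
  have hconsti : IntervalIntegrable (fun t => g m + g1 m * (t - m)) volume x (x + h) := by
    apply Continuous.intervalIntegrable
    continuity
  have hconst : (∫ t in x..(x + h), (g m + g1 m * (t - m))) = h * g m := by
    have hz : (∫ t in x..(x + h), (t - m)) = 0 := by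
      rw [intervalIntegral.integral_comp_sub_right (fun t => t) m, integral_id, hm_def]
      ring
    rw [intervalIntegral.integral_add intervalIntegrable_const
      (by apply Continuous.intervalIntegrable; continuity),
      intervalIntegral.integral_const,
      intervalIntegral.integral_const_mul, hz]
    simp only [smul_eq_mul]
    ring
  have hkey : h * g m - ∫ t in x..(x + h), g t
      = ∫ t in x..(x + h), (g m + g1 m * (t - m) - g t) := by
    rw [intervalIntegral.integral_sub hconsti hgi, hconst]
  rw [hkey]
  calc |∫ t in x..(x + h), (g m + g1 m * (t - m) - g t)| ≤ V * (h / 2) * |x + h - x| := by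
        have := intervalIntegral.norm_integral_le_of_norm_le_const (C := V * (h / 2))
          (f := fun t => g m + g1 m * (t - m) - g t) (a := x) (b := x + h) ?_
        · rwa [Real.norm_eq_abs] at this
        · intro t ht
          rw [Real.norm_eq_abs]
          exact hptwise t ht
    _ = h ^ 2 / 2 * V := by rw [abs_of_pos (by linarith : (0:ℝ) < x + h - x)]; ring

/-- Let `f : ℝ → ℝ` be twice differentiable with `|f|, |f'|, |f''| ≤ β_{1+δ}` for some `δ > 0`.
Then, uniformly over `u, v ∈ ℝ` and `a ∈ ℕ`, the midpoint Riemann sum over the shifted Fourier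
frequencies `ω̃_k = 2πk/λ + π/λ` approximates the integral with error `≤ K/λ²`:
`|(2π/λ) ∑_{k=−a}^{a−1} f(ω̃_k−u) f(ω̃_k−v) − ∫_{−2πa/λ}^{2πa/λ} f(ω−u) f(ω−v) dω| ≤ K/λ²`. -/
theorem midpoint_riemann_sum_error (C δ : ℝ) (hC : 0 < C) (hδ : 0 < δ)
    (f : ℝ → ℝ)
    (hdiff : Differentiable ℝ f) (hdiff2 : Differentiable ℝ (deriv f))
    (hf : ∀ x, |f x| ≤ betaFun C (1 + δ) x)
    (hf' : ∀ x, |deriv f x| ≤ betaFun C (1 + δ) x)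
    (hf'' : ∀ x, |deriv (deriv f) x| ≤ betaFun C (1 + δ) x) :
    ∃ K : ℝ, 0 < K ∧ ∀ (a : ℕ) (lam : ℝ), 1 ≤ lam → ∀ u v : ℝ,
      |(2 * Real.pi / lam) *
          ∑ k ∈ Finset.Icc (-(a : ℤ)) ((a : ℤ) - 1),
            f ((2 * Real.pi * k / lam + Real.pi / lam) - u) *
              f ((2 * Real.pi * k / lam + Real.pi / lam) - v) -
        ∫ ω in (-(2 * Real.pi * a / lam))..(2 * Real.pi * a / lam),
          f (ω - u) * f (ω - v)| ≤ K / lam ^ 2 := by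
  have hβint : Integrable (betaFun C (1 + δ)) := betaFun_integrable hC hδ
  set B := ∫ x, betaFun C (1 + δ) x with hBdef
  have hB0 : 0 ≤ B := integral_nonneg (betaFun_nonneg hC.le)
  refine ⟨8 * Real.pi ^ 2 * C * B + 1, by positivity, ?_⟩
  intro a lam hlam u v
  have hlam0 : (0:ℝ) < lam := by linarith
  have hπ := Real.pi_pos
  set β := betaFun C (1 + δ) with hβdef
  set g : ℝ → ℝ := fun ω => f (ω - u) * f (ω - v) with hgdef
  set g1 : ℝ → ℝ := fun ω => deriv f (ω - u) * f (ω - v) + f (ω - u) * deriv f (ω - v)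
    with hg1def
  set g2 : ℝ → ℝ := fun ω =>
    (deriv (deriv f) (ω - u) * f (ω - v) + deriv f (ω - u) * deriv f (ω - v)) +
    (deriv f (ω - u) * deriv f (ω - v) + f (ω - u) * deriv (deriv f) (ω - v)) with hg2def
  have hshift : ∀ (F : ℝ → ℝ) (hF : Differentiable ℝ F) (c ω : ℝ),
      HasDerivAt (fun ω => F (ω - c)) (deriv F (ω - c)) ω := by
    intro F hF c ω
    have := ((hF (ω - c)).hasDerivAt).comp ω ((hasDerivAt_id ω).sub_const c)
    exact this.congr_deriv (by ring)
  have hg : ∀ ω, HasDerivAt g (g1 ω) ω := by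
    intro ω
    exact (hshift f hdiff u ω).mul (hshift f hdiff v ω)
  have hg1 : ∀ ω, HasDerivAt g1 (g2 ω) ω := by
    intro ω
    exact ((hshift (deriv f) hdiff2 u ω).mul (hshift f hdiff v ω)).add
      ((hshift f hdiff u ω).mul (hshift (deriv f) hdiff2 v ω))
  have hβle : ∀ x, β x ≤ C := betaFun_le hC.le (by linarith)
  have hβnn : ∀ x, 0 ≤ β x := betaFun_nonneg hC.le
  have hg2bound : ∀ ω, |g2 ω| ≤ 4 * C * β (ω - u) := by
    intro ω
    have t1 : |deriv (deriv f) (ω - u) * f (ω - v)| ≤ β (ω - u) * C := by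
      rw [abs_mul]
      exact mul_le_mul (hf'' _) ((hf _).trans (hβle _)) (abs_nonneg _) (hβnn _)
    have t2 : |deriv f (ω - u) * deriv f (ω - v)| ≤ β (ω - u) * C := by
      rw [abs_mul]
      exact mul_le_mul (hf' _) ((hf' _).trans (hβle _)) (abs_nonneg _) (hβnn _)
    have t3 : |f (ω - u) * deriv (deriv f) (ω - v)| ≤ β (ω - u) * C := by
      rw [abs_mul]
      exact mul_le_mul (hf _) ((hf'' _).trans (hβle _)) (abs_nonneg _) (hβnn _)
    calc |g2 ω| ≤ |deriv (deriv f) (ω - u) * f (ω - v) + deriv f (ω - u) * deriv f (ω - v)| +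
          |deriv f (ω - u) * deriv f (ω - v) + f (ω - u) * deriv (deriv f) (ω - v)| :=
            abs_add_le _ _
      _ ≤ (|deriv (deriv f) (ω - u) * f (ω - v)| + |deriv f (ω - u) * deriv f (ω - v)|) +
          (|deriv f (ω - u) * deriv f (ω - v)| + |f (ω - u) * deriv (deriv f) (ω - v)|) := by
            gcongr <;> exact abs_add_le _ _
      _ ≤ (β (ω - u) * C + β (ω - u) * C) + (β (ω - u) * C + β (ω - u) * C) := by
            gcongr
      _ = 4 * C * β (ω - u) := by ring
  have hβu_int : Integrable (fun ω : ℝ => 4 * C * β (ω - u)) :=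
    (hβint.comp_sub_right u).const_mul (4 * C)
  have hg2meas : Measurable g2 := by
    have mf : Measurable f := hdiff.continuous.measurable
    have mf' : Measurable (deriv f) := hdiff2.continuous.measurable
    have mf'' : Measurable (deriv (deriv f)) := measurable_deriv _
    have msu : Measurable (fun ω : ℝ => ω - u) := measurable_id.sub measurable_const
    have msv : Measurable (fun ω : ℝ => ω - v) := measurable_id.sub measurable_const
    exact (((mf''.comp msu).mul (mf.comp msv)).add ((mf'.comp msu).mul (mf'.comp msv))).add
      (((mf'.comp msu).mul (mf'.comp msv)).add ((mf.comp msu).mul (mf''.comp msv)))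
  have hg2int : Integrable g2 := by
    apply Integrable.mono' hβu_int hg2meas.aestronglyMeasurable
    filter_upwards with ω
    rw [Real.norm_eq_abs]
    exact hg2bound ω
  have hg2i : ∀ x y : ℝ, IntervalIntegrable g2 volume x y := fun x y =>
    hg2int.intervalIntegrable
  have hgcont : Continuous g := by
    have : Differentiable ℝ g := fun s => (hg s).differentiableAt
    exact this.continuous
  set A : ℝ := 2 * Real.pi * a / lam with hAdef
  set hs : ℝ := 2 * Real.pi / lam with hsdef
  have hhs : 0 < hs := by positivity
  set xj : ℕ → ℝ := fun j => -A + j * hs with hxjdef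
  have hxj : ∀ j : ℕ, xj (j + 1) = xj j + hs := by
    intro j
    simp only [hxjdef]
    push_cast
    ring
  have hx0 : xj 0 = -A := by simp [hxjdef]
  have hxN : xj (2 * a) = A := by
    simp only [hxjdef, hAdef, hsdef]
    push_cast
    field_simp
    ring
  -- sum over intervals for g
  have hsum_g : (∑ j ∈ Finset.range (2 * a), ∫ t in xj j..xj (j + 1), g t)
      = ∫ t in (-A)..A, g t := by
    rw [← hx0, ← hxN]
    exact intervalIntegral.sum_integral_adjacent_intervals
      (fun k _ => hgcont.intervalIntegrable _ _)
  have hsum_g2 : (∑ j ∈ Finset.range (2 * a), ∫ t in xj j..xj (j + 1), |g2 t|)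
      = ∫ t in (-A)..A, |g2 t| := by
    rw [← hx0, ← hxN]
    exact intervalIntegral.sum_integral_adjacent_intervals
      (fun k _ => hg2int.abs.intervalIntegrable)
  -- reindex the sum
  have hre : (∑ k ∈ Finset.Icc (-(a : ℤ)) ((a : ℤ) - 1),
        f ((2 * Real.pi * k / lam + Real.pi / lam) - u) *
          f ((2 * Real.pi * k / lam + Real.pi / lam) - v))
      = ∑ j ∈ Finset.range (2 * a), g (xj j + hs / 2) := by
    apply Finset.sum_nbij' (i := fun k => (k + (a : ℤ)).toNat) (j := fun n => (n : ℤ) - a)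
    · intro k hk
      simp only [Finset.mem_Icc] at hk
      simp only [Finset.mem_range]
      omega
    · intro n hn
      simp only [Finset.mem_range] at hn
      simp only [Finset.mem_Icc]
      omega
    · intro k hk
      simp only [Finset.mem_Icc] at hk
      omega
    · intro n hn
      simp only [Finset.mem_range] at hn
      omega
    · intro k hk
      simp only [Finset.mem_Icc] at hk
      have hcast : (((k + (a : ℤ)).toNat : ℝ)) = (k : ℝ) + a := by
        have h1 : (0:ℤ) ≤ k + a := by omega
        have h2 : ((k + (a : ℤ)).toNat : ℤ) = k + a := Int.toNat_of_nonneg h1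
        exact_mod_cast congrArg (fun z : ℤ => (z : ℝ)) h2
      have harg : xj (k + (a : ℤ)).toNat + hs / 2 = 2 * Real.pi * k / lam + Real.pi / lam := by
        simp only [hxjdef, hsdef, hAdef, hcast]
        field_simp
        ring
      rw [hgdef]
      simp only [harg]
  -- per-interval bound
  have hstep_bd : ∀ j ∈ Finset.range (2 * a),
      |hs * g (xj j + hs / 2) - ∫ t in xj j..xj (j + 1), g t| ≤
        hs ^ 2 / 2 * ∫ t in xj j..xj (j + 1), |g2 t| := by
    intro j _
    rw [hxj j]
    exact midpoint_step g g1 g2 hg hg1 hg2i (xj j) hs hhs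
  -- integral of |g2| bound
  have hA0 : 0 ≤ A := by positivity
  have hInt_bd : (∫ t in (-A)..A, |g2 t|) ≤ 4 * C * B := by
    have s1 : (∫ t in (-A)..A, |g2 t|) ≤ ∫ t in (-A)..A, 4 * C * β (t - u) :=
      intervalIntegral.integral_mono_on (by linarith) (hg2int.abs.intervalIntegrable)
        (hβu_int.intervalIntegrable) (fun t _ => hg2bound t)
    have s2 : (∫ t in (-A)..A, 4 * C * β (t - u)) = 4 * C * ∫ t in (-A - u)..(A - u), β t := by
      rw [intervalIntegral.integral_const_mul, intervalIntegral.integral_comp_sub_right β u]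
    have s3 : (∫ t in (-A - u)..(A - u), β t) ≤ B := by
      rw [intervalIntegral.integral_of_le (by linarith)]
      exact setIntegral_le_integral hβint (Filter.Eventually.of_forall hβnn)
    calc (∫ t in (-A)..A, |g2 t|) ≤ 4 * C * ∫ t in (-A - u)..(A - u), β t := by
          rw [← s2]; exact s1
      _ ≤ 4 * C * B := by
          apply mul_le_mul_of_nonneg_left s3 (by positivity)
  -- put it all together
  have hmain : |hs * ∑ j ∈ Finset.range (2 * a), g (xj j + hs / 2) - ∫ t in (-A)..A, g t|
      ≤ hs ^ 2 / 2 * (4 * C * B) := by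
    rw [← hsum_g, Finset.mul_sum, ← Finset.sum_sub_distrib]
    calc |∑ j ∈ Finset.range (2 * a),
            (hs * g (xj j + hs / 2) - ∫ t in xj j..xj (j + 1), g t)|
        ≤ ∑ j ∈ Finset.range (2 * a),
            |hs * g (xj j + hs / 2) - ∫ t in xj j..xj (j + 1), g t| :=
          Finset.abs_sum_le_sum_abs _ _
      _ ≤ ∑ j ∈ Finset.range (2 * a), hs ^ 2 / 2 * ∫ t in xj j..xj (j + 1), |g2 t| :=
          Finset.sum_le_sum hstep_bd
      _ = hs ^ 2 / 2 * ∑ j ∈ Finset.range (2 * a), ∫ t in xj j..xj (j + 1), |g2 t| := by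
          rw [Finset.mul_sum]
      _ = hs ^ 2 / 2 * ∫ t in (-A)..A, |g2 t| := by rw [hsum_g2]
      _ ≤ hs ^ 2 / 2 * (4 * C * B) := by
          apply mul_le_mul_of_nonneg_left hInt_bd (by positivity)
  have hfinal : hs ^ 2 / 2 * (4 * C * B) ≤ (8 * Real.pi ^ 2 * C * B + 1) / lam ^ 2 := by
    have heq : hs ^ 2 / 2 * (4 * C * B) = (8 * Real.pi ^ 2 * C * B) / lam ^ 2 := by
      rw [hsdef]
      field_simp
      ring
    rw [heq]
    apply div_le_div_of_nonneg_right _ (by positivity)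
    · linarith
  calc |(2 * Real.pi / lam) *
          ∑ k ∈ Finset.Icc (-(a : ℤ)) ((a : ℤ) - 1),
            f ((2 * Real.pi * k / lam + Real.pi / lam) - u) *
              f ((2 * Real.pi * k / lam + Real.pi / lam) - v) -
        ∫ ω in (-(2 * Real.pi * a / lam))..(2 * Real.pi * a / lam),
          f (ω - u) * f (ω - v)|
      = |hs * ∑ j ∈ Finset.range (2 * a), g (xj j + hs / 2) - ∫ t in (-A)..A, g t| := by
        rw [hre]
    _ ≤ hs ^ 2 / 2 * (4 * C * B) := hmain
    _ ≤ (8 * Real.pi ^ 2 * C * B + 1) / lam ^ 2 := hfinal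
end

section
/- Let h: ℝ → ℝ satisfy the smooth taper conditions (symmetric, support [−1/2,1/2], twice differentiable) and let f: ℝ → ℝ be positive, bounded, with ∫ f³ < ∞ and bounded derivative. Then there is a constant such that for all a ∈ ℕ and λ sufficiently large, ∑_{m=−2a+1}^{2a−1} H(m)² ∫_{−2πa/λ}^{2πa/λ} f³(x)|f(ω_m + x) − f(x)| dx ≲ (log λ)²/λ + 1/(log λ)³, and in particular this quantity is O(1/(log λ)³) as λ → ∞. -/
open MeasureTheory Real

private lemma Ioc_succ_insert (M n : ℤ) (h : M ≤ n) :
    Finset.Ioc M (n + 1) = insert (n + 1) (Finset.Ioc M n) := by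
  ext x
  simp only [Finset.mem_Ioc, Finset.mem_insert]
  omega

private lemma tele_aux (M : ℤ) (hM : 1 ≤ M) :
    ∀ n, M ≤ n → ∑ m ∈ Finset.Ioc M n, (1:ℝ)/(m:ℝ)^4 ≤ 1/(M:ℝ)^3 - 1/(n:ℝ)^3 := by
  intro n
  refine Int.le_induction (motive := fun k _ => ∑ m ∈ Finset.Ioc M k, (1:ℝ)/(m:ℝ)^4 ≤ 1/(M:ℝ)^3 - 1/(k:ℝ)^3) ?_ ?_ n
  · simp
  · intro n hn ih
    rw [Ioc_succ_insert M n hn, Finset.sum_insert (by simp)]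
    have hn1 : (1:ℝ) ≤ (n:ℝ) := by exact_mod_cast hM.trans hn
    have hx : (n:ℝ)^3*((n:ℝ)+2) ≤ ((n:ℝ)+1)^4 := by nlinarith [hn1, pow_nonneg (show (0:ℝ) ≤ (n:ℝ) by linarith) 3, sq_nonneg ((n:ℝ))]
    have key : (1:ℝ)/((n:ℝ)+1)^4 + 1/((n:ℝ)+1)^3 ≤ 1/(n:ℝ)^3 := by
      rw [div_add_div _ _ (by positivity) (by positivity),
        div_le_div_iff₀ (by positivity) (by positivity)]
      nlinarith [mul_le_mul_of_nonneg_left hx (show (0:ℝ) ≤ ((n:ℝ)+1)^3 by positivity)]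
    push_cast
    linarith [ih]

private lemma tele (M n : ℤ) (hM : 1 ≤ M) :
    ∑ m ∈ Finset.Ioc M n, (1:ℝ)/(m:ℝ)^4 ≤ 1/(M:ℝ)^3 := by
  rcases le_or_gt M n with hle | hlt
  · have h1 : (1:ℝ) ≤ (n:ℝ) := by exact_mod_cast hM.trans hle
    have := tele_aux M hM n hle
    have h2 : (0:ℝ) ≤ 1/(n:ℝ)^3 := by positivity
    linarith
  · rw [Finset.Ioc_eq_empty (by omega)]
    simp only [Finset.sum_empty]
    positivity

private lemma sum_pow4 (M : ℤ) (hM : 1 ≤ M) (F : Finset ℤ) (hF : ∀ m ∈ F, M < |m|) :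
    ∑ m ∈ F, (1:ℝ)/(m:ℝ)^4 ≤ 2/(M:ℝ)^3 := by
  set n : ℤ := ((F.sup Int.natAbs : ℕ) : ℤ) with hn
  set G := Finset.Ioc M n with hG
  have hFsub : F ⊆ G ∪ G.image (fun m => -m) := by
    intro m hm
    have h1 : M < |m| := hF m hm
    have h2 : |m| ≤ n := by
      have := Finset.le_sup (f := Int.natAbs) hm
      rw [hn, Int.abs_eq_natAbs]
      exact_mod_cast this
    rcases le_or_gt 0 m with hm0 | hm0
    · apply Finset.mem_union_left
      rw [hG, Finset.mem_Ioc]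
      rw [abs_of_nonneg hm0] at h1 h2
      exact ⟨h1, h2⟩
    · apply Finset.mem_union_right
      rw [Finset.mem_image]
      refine ⟨-m, ?_, by ring⟩
      rw [hG, Finset.mem_Ioc]
      rw [abs_of_neg hm0] at h1 h2
      exact ⟨h1, h2⟩
  have step1 : ∑ m ∈ F, (1:ℝ)/(m:ℝ)^4 ≤ ∑ m ∈ G ∪ G.image (fun m => -m), (1:ℝ)/(m:ℝ)^4 :=
    Finset.sum_le_sum_of_subset_of_nonneg hFsub (fun m _ _ => by positivity)
  have step2 : ∑ m ∈ G ∪ G.image (fun m => -m), (1:ℝ)/(m:ℝ)^4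
      ≤ ∑ m ∈ G, (1:ℝ)/(m:ℝ)^4 + ∑ m ∈ G.image (fun m => -m), (1:ℝ)/(m:ℝ)^4 := by
    have heq := Finset.sum_union_inter (s₁ := G) (s₂ := G.image (fun m => -m))
      (f := fun m => (1:ℝ)/(m:ℝ)^4)
    have hpos : (0:ℝ) ≤ ∑ m ∈ G ∩ G.image (fun m => -m), (1:ℝ)/(m:ℝ)^4 :=
      Finset.sum_nonneg (fun m _ => by positivity)
    linarith
  have step3 : ∑ m ∈ G.image (fun m => -m), (1:ℝ)/(m:ℝ)^4 = ∑ m ∈ G, (1:ℝ)/(m:ℝ)^4 := by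
    rw [Finset.sum_image (by intro x _ y _ hxy; exact neg_inj.mp hxy)]
    apply Finset.sum_congr rfl
    intro m _
    push_cast
    ring
  have step4 := tele M n hM
  calc ∑ m ∈ F, (1:ℝ)/(m:ℝ)^4 ≤ _ := step1
    _ ≤ _ := step2
    _ = 2 * ∑ m ∈ G, (1:ℝ)/(m:ℝ)^4 := by rw [step3]; ring
    _ ≤ 2 * (1/(M:ℝ)^3) := by linarith
    _ = 2/(M:ℝ)^3 := by ring


private lemma sum_split (F : Finset ℤ) (t : ℤ → ℝ) (M : ℕ) (hM : 1 ≤ M) (c1 b : ℝ)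
    (hc1 : 0 ≤ c1) (hb : 0 ≤ b)
    (ht0 : ∀ m ∈ F, 0 ≤ t m)
    (ht1 : ∀ m ∈ F, m.natAbs ≤ M → t m ≤ c1)
    (ht2 : ∀ m ∈ F, M < m.natAbs → t m ≤ b / (m:ℝ)^4) :
    ∑ m ∈ F, t m ≤ (2*(M:ℝ)+1) * c1 + b * (2/(M:ℝ)^3) := by
  classical
  rw [← Finset.sum_filter_add_sum_filter_not F (fun m => m.natAbs ≤ M)]
  have part1 : ∑ m ∈ F.filter (fun m => m.natAbs ≤ M), t m ≤ (2*(M:ℝ)+1) * c1 := by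
    have hsub : F.filter (fun m => m.natAbs ≤ M) ⊆ Finset.Icc (-(M:ℤ)) M := by
      intro m hm
      rw [Finset.mem_filter] at hm
      rw [Finset.mem_Icc]
      have := hm.2
      omega
    calc ∑ m ∈ F.filter (fun m => m.natAbs ≤ M), t m
        ≤ (F.filter (fun m => m.natAbs ≤ M)).card • c1 :=
          Finset.sum_le_card_nsmul _ _ _ (fun m hm => by
            rw [Finset.mem_filter] at hm
            exact ht1 m hm.1 hm.2)
      _ = ((F.filter (fun m => m.natAbs ≤ M)).card : ℝ) * c1 := by rw [nsmul_eq_mul]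
      _ ≤ (2*(M:ℝ)+1) * c1 := by
          apply mul_le_mul_of_nonneg_right _ hc1
          have hcard := Finset.card_le_card hsub
          have hIcc : (Finset.Icc (-(M:ℤ)) M).card = 2*M+1 := by
            rw [Int.card_Icc]
            omega
          calc ((F.filter (fun m => m.natAbs ≤ M)).card : ℝ)
              ≤ ((Finset.Icc (-(M:ℤ)) M).card : ℝ) := by exact_mod_cast hcard
            _ = 2*(M:ℝ)+1 := by rw [hIcc]; push_cast; ring
  have part2 : ∑ m ∈ F.filter (fun m => ¬ m.natAbs ≤ M), t m ≤ b * (2/(M:ℝ)^3) := by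
    calc ∑ m ∈ F.filter (fun m => ¬ m.natAbs ≤ M), t m
        ≤ ∑ m ∈ F.filter (fun m => ¬ m.natAbs ≤ M), b * ((1:ℝ)/(m:ℝ)^4) := by
          apply Finset.sum_le_sum
          intro m hm
          rw [Finset.mem_filter] at hm
          rw [mul_one_div]
          exact ht2 m hm.1 (by omega)
      _ = b * ∑ m ∈ F.filter (fun m => ¬ m.natAbs ≤ M), (1:ℝ)/(m:ℝ)^4 := by
          rw [Finset.mul_sum]
      _ ≤ b * (2/(M:ℝ)^3) := by
          apply mul_le_mul_of_nonneg_left _ hb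
          have hmem : ∀ m ∈ F.filter (fun m => ¬ m.natAbs ≤ M), (M:ℤ) < |m| := by
            intro m hm
            rw [Finset.mem_filter] at hm
            rw [Int.abs_eq_natAbs]
            omega
          have hsp := sum_pow4 (M:ℤ) (by exact_mod_cast hM) _ hmem
          calc ∑ m ∈ F.filter (fun m => ¬ m.natAbs ≤ M), (1:ℝ)/(m:ℝ)^4
              ≤ 2/(((M:ℤ)):ℝ)^3 := hsp
            _ = 2/(M:ℝ)^3 := by norm_num
  exact add_le_add part1 part2


private lemma boundary_zero {h : ℝ → ℝ} (hc : Continuous h)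
    (hsupp : ∀ s, s ∉ Set.Icc (-(1/2) : ℝ) (1/2) → h s = 0) :
    h (1/2) = 0 ∧ h (-(1/2)) = 0 := by
  constructor
  · have h0 : ∀ s ∈ Set.Ioi (1/2:ℝ), h s = 0 := by
      intro s hs
      apply hsupp
      simp only [Set.mem_Icc, not_and_or, not_le]
      right; exact hs
    have ht : Filter.Tendsto h (nhdsWithin (1/2) (Set.Ioi (1/2:ℝ))) (nhds (h (1/2))) :=
      hc.continuousWithinAt
    have ht2 : Filter.Tendsto h (nhdsWithin (1/2) (Set.Ioi (1/2:ℝ))) (nhds 0) := by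
      refine Filter.Tendsto.congr' ?_ tendsto_const_nhds
      filter_upwards [self_mem_nhdsWithin] with s hs
      exact (h0 s hs).symm
    exact tendsto_nhds_unique ht ht2
  · have h0 : ∀ s ∈ Set.Iio (-(1/2):ℝ), h s = 0 := by
      intro s hs
      apply hsupp
      simp only [Set.mem_Icc, not_and_or, not_le]
      left; exact hs
    have ht : Filter.Tendsto h (nhdsWithin (-(1/2)) (Set.Iio (-(1/2):ℝ))) (nhds (h (-(1/2)))) :=
      hc.continuousWithinAt
    have ht2 : Filter.Tendsto h (nhdsWithin (-(1/2)) (Set.Iio (-(1/2):ℝ))) (nhds 0) := by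
      refine Filter.Tendsto.congr' ?_ tendsto_const_nhds
      filter_upwards [self_mem_nhdsWithin] with s hs
      exact (h0 s hs).symm
    exact tendsto_nhds_unique ht ht2

private lemma coeff_bound (h : ℝ → ℝ)
    (hsupp : ∀ s, s ∉ Set.Icc (-(1/2) : ℝ) (1/2) → h s = 0)
    (hsm : ContDiff ℝ 2 h) :
    ∃ C : ℝ, 0 < C ∧ ∀ m : ℤ,
      |∫ s in (-(1/2) : ℝ)..(1/2), h s ^ 2 * Real.cos (2 * Real.pi * m * s)| ≤ C ∧
      (m ≠ 0 → |∫ s in (-(1/2) : ℝ)..(1/2), h s ^ 2 * Real.cos (2 * Real.pi * m * s)|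
        ≤ C / (m:ℝ)^2) := by
  have hc : Continuous h := hsm.continuous
  have h2' : ContDiff ℝ ((1:ℕ)+1) h := by exact_mod_cast hsm
  obtain ⟨hdiff, -, hcd1⟩ := contDiff_succ_iff_deriv.mp h2'
  obtain ⟨hdiff1, hc2⟩ := contDiff_one_iff_deriv.mp hcd1
  set h1 : ℝ → ℝ := deriv h with hh1
  set h2 : ℝ → ℝ := deriv h1 with hh2
  have hc1 : Continuous h1 := hcd1.continuous
  have hd1 : ∀ x, HasDerivAt h (h1 x) x := fun x => (hdiff x).hasDerivAt
  have hd2 : ∀ x, HasDerivAt h1 (h2 x) x := fun x => (hdiff1 x).hasDerivAt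
  obtain ⟨hz1, hz2⟩ := boundary_zero hc hsupp
  -- bounds on compact set
  have hgc : Continuous (fun s => h s ^ 2) := by continuity
  have hg2c : Continuous (fun s => 2 * (h1 s ^ 2 + h s * h2 s)) := by continuity
  obtain ⟨C0, hC0⟩ := (isCompact_Icc (a := (-(1/2):ℝ)) (b := 1/2)).exists_bound_of_continuousOn
    hgc.continuousOn
  obtain ⟨C2, hC2⟩ := (isCompact_Icc (a := (-(1/2):ℝ)) (b := 1/2)).exists_bound_of_continuousOn
    hg2c.continuousOn
  have hmem0 : (0:ℝ) ∈ Set.Icc (-(1/2):ℝ) (1/2) := by norm_num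
  have hC0nn : 0 ≤ C0 := le_trans (norm_nonneg _) (hC0 0 hmem0)
  have hC2nn : 0 ≤ C2 := le_trans (norm_nonneg _) (hC2 0 hmem0)
  refine ⟨max C0 C2 + 1, by positivity, fun m => ⟨?_, fun hm => ?_⟩⟩
  · -- trivial bound
    have hb : ∀ s ∈ Set.uIoc (-(1/2):ℝ) (1/2), ‖h s ^ 2 * Real.cos (2 * Real.pi * m * s)‖ ≤ C0 := by
      intro s hs
      have hs' : s ∈ Set.Icc (-(1/2):ℝ) (1/2) := by
        rw [Set.uIoc_of_le (by norm_num)] at hs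
        exact ⟨le_of_lt hs.1, hs.2⟩
      rw [norm_mul]
      calc ‖h s ^ 2‖ * ‖Real.cos (2 * Real.pi * m * s)‖ ≤ C0 * 1 := by
            apply mul_le_mul (hC0 s hs') (by rw [Real.norm_eq_abs]; exact Real.abs_cos_le_one _)
              (norm_nonneg _) hC0nn
        _ = C0 := mul_one _
    have := intervalIntegral.norm_integral_le_of_norm_le_const hb
    rw [Real.norm_eq_abs] at this
    calc |∫ s in (-(1/2):ℝ)..(1/2), h s ^ 2 * Real.cos (2 * Real.pi * m * s)| ≤ C0 * |(1/2:ℝ) - (-(1/2))| := this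
      _ = C0 := by norm_num
      _ ≤ max C0 C2 + 1 := by
          have := le_max_left C0 C2
          linarith
  · -- integration by parts twice
    set ω : ℝ := 2 * Real.pi * m with hω
    have hmne : (m:ℝ) ≠ 0 := Int.cast_ne_zero.mpr hm
    have hωne : ω ≠ 0 := by
      rw [hω]
      have := Real.pi_ne_zero
      positivity
    have hlin : ∀ x : ℝ, HasDerivAt (fun s : ℝ => ω * s) ω x := by
      intro x
      simpa using (hasDerivAt_id x).const_mul ω
    have hv : ∀ x : ℝ, HasDerivAt (fun s => Real.sin (ω * s) / ω) (Real.cos (ω * x)) x := by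
      intro x
      have hsin : HasDerivAt (fun s => Real.sin (ω * s)) (Real.cos (ω * x) * ω) x :=
        (Real.hasDerivAt_sin (ω * x)).comp x (hlin x)
      have := hsin.div_const ω
      simpa [mul_div_assoc, div_self hωne] using this
    have hu : ∀ x : ℝ, HasDerivAt (fun s => h s ^ 2) (2 * h x * h1 x) x := by
      intro x
      exact ((hd1 x).pow 2).congr_deriv (by norm_num)
    have hu2 : ∀ x : ℝ, HasDerivAt (fun s => 2 * h s * h1 s) (2 * (h1 x ^ 2 + h x * h2 x)) x := by
      intro x
      have h' : HasDerivAt (fun s => 2 * (h s * h1 s)) (2 * (h1 x * h1 x + h x * h2 x)) x :=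
        ((hd1 x).mul (hd2 x)).const_mul 2
      have heq : (fun s => 2 * (h s * h1 s)) = (fun s => 2 * h s * h1 s) := by
        funext s; ring
      rw [heq] at h'
      convert h' using 1
      ring
    have hv2 : ∀ x : ℝ, HasDerivAt (fun s => -Real.cos (ω * s) / ω ^ 2) (Real.sin (ω * x) / ω) x := by
      intro x
      have hcos : HasDerivAt (fun s => Real.cos (ω * s)) (-Real.sin (ω * x) * ω) x :=
        (Real.hasDerivAt_cos (ω * x)).comp x (hlin x)
      have h' := hcos.neg.div_const (ω ^ 2)
      have heq : (fun s => -Real.cos (ω * s) / ω ^ 2) = (fun s => -(Real.cos (ω * s)) / ω ^ 2) := rfl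
      rw [heq]
      refine h'.congr_deriv ?_
      rw [neg_mul, neg_neg, pow_two, mul_div_mul_right _ _ hωne]
    have hcosc : Continuous (fun s : ℝ => Real.cos (ω * s)) :=
      Real.continuous_cos.comp (continuous_const.mul continuous_id)
    have hsinc : Continuous (fun s : ℝ => Real.sin (ω * s) / ω) :=
      (Real.continuous_sin.comp (continuous_const.mul continuous_id)).div_const ω
    have hu'c : Continuous (fun s => 2 * h s * h1 s) := (continuous_const.mul hc).mul hc1
    have hu2'c : Continuous (fun s => 2 * (h1 s ^ 2 + h s * h2 s)) :=
      continuous_const.mul ((hc1.pow 2).add (hc.mul hc2))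
    have hIBP1 := intervalIntegral.integral_mul_deriv_eq_deriv_mul
      (a := (-(1/2):ℝ)) (b := 1/2)
      (u := fun s => h s ^ 2) (u' := fun s => 2 * h s * h1 s)
      (v := fun s => Real.sin (ω * s) / ω) (v' := fun s => Real.cos (ω * s))
      (fun x _ => hu x) (fun x _ => hv x)
      (hu'c.intervalIntegrable _ _)
      (hcosc.intervalIntegrable _ _)
    have hIBP2 := intervalIntegral.integral_mul_deriv_eq_deriv_mul
      (a := (-(1/2):ℝ)) (b := 1/2)
      (u := fun s => 2 * h s * h1 s) (u' := fun s => 2 * (h1 s ^ 2 + h s * h2 s))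
      (v := fun s => -Real.cos (ω * s) / ω ^ 2) (v' := fun s => Real.sin (ω * s) / ω)
      (fun x _ => hu2 x) (fun x _ => hv2 x)
      (hu2'c.intervalIntegrable _ _)
      (hsinc.intervalIntegrable _ _)
    simp only [hz1, hz2, zero_pow, ne_eq, OfNat.ofNat_ne_zero, not_false_eq_true,
      mul_zero, zero_mul, sub_zero, zero_sub] at hIBP1 hIBP2
    -- hIBP1 : ∫ h²·cos(ωs) = -∫ (2hh1)(sin(ωs)/ω)   (since h(±1/2)=0, so (h ±)²=0)
    -- hIBP2 : ∫ (2hh1)(sin/ω) = -∫ (2(h1²+h h2))·(-cos/ω²)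
    have key : (∫ s in (-(1/2):ℝ)..(1/2), h s ^ 2 * Real.cos (ω * s))
        = ∫ s in (-(1/2):ℝ)..(1/2), (2 * (h1 s ^ 2 + h s * h2 s)) * (-Real.cos (ω * s) / ω ^ 2) := by
      rw [hIBP1, hIBP2]
      ring
    have hb : ∀ s ∈ Set.uIoc (-(1/2):ℝ) (1/2),
        ‖(2 * (h1 s ^ 2 + h s * h2 s)) * (-Real.cos (ω * s) / ω ^ 2)‖ ≤ C2 / ω ^ 2 := by
      intro s hs
      have hs' : s ∈ Set.Icc (-(1/2):ℝ) (1/2) := by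
        rw [Set.uIoc_of_le (by norm_num)] at hs
        exact ⟨le_of_lt hs.1, hs.2⟩
      rw [norm_mul]
      have h1' : ‖(2 * (h1 s ^ 2 + h s * h2 s))‖ ≤ C2 := hC2 s hs'
      have hω2pos : (0:ℝ) < ω ^ 2 := by positivity
      have h2' : ‖-Real.cos (ω * s) / ω ^ 2‖ ≤ 1 / ω ^ 2 := by
        rw [norm_div, norm_neg, Real.norm_eq_abs, Real.norm_eq_abs,
          abs_of_pos hω2pos]
        gcongr
        exact Real.abs_cos_le_one _
      calc ‖(2 * (h1 s ^ 2 + h s * h2 s))‖ * ‖-Real.cos (ω * s) / ω ^ 2‖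
          ≤ C2 * (1 / ω ^ 2) := mul_le_mul h1' h2' (norm_nonneg _) hC2nn
        _ = C2 / ω ^ 2 := by ring
    have hnorm := intervalIntegral.norm_integral_le_of_norm_le_const hb
    rw [Real.norm_eq_abs] at hnorm
    have hm2pos : (0:ℝ) < (m:ℝ)^2 := by positivity
    have hω2ge : (m:ℝ)^2 ≤ ω^2 := by
      have hpi : (1:ℝ) ≤ 4 * Real.pi ^ 2 := by nlinarith [Real.pi_gt_three]
      rw [hω]
      nlinarith [sq_nonneg ((m:ℝ)), hpi]
    calc |∫ s in (-(1/2):ℝ)..(1/2), h s ^ 2 * Real.cos (ω * s)|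
        = |∫ s in (-(1/2):ℝ)..(1/2), (2 * (h1 s ^ 2 + h s * h2 s)) * (-Real.cos (ω * s) / ω ^ 2)| := by rw [key]
      _ ≤ C2 / ω ^ 2 * |(1/2:ℝ) - (-(1/2))| := hnorm
      _ = C2 / ω ^ 2 := by norm_num
      _ ≤ C2 / (m:ℝ)^2 := by gcongr
      _ ≤ (max C0 C2 + 1) / (m:ℝ)^2 := by
          gcongr
          linarith [le_max_right C0 C2]

/-- Let `h` satisfy the smooth taper conditions (symmetric, support `[−1/2,1/2]`, twice
differentiable), so that `H(m) = ∫_{−1/2}^{1/2} h²(s) cos(2πms) ds` satisfies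
`|H(m)| ≲ 1/m²`, and let `f : ℝ → ℝ` be positive, bounded, with `∫ f³ < ∞` and bounded
derivative.  Then for all `a ∈ ℕ` and `λ` sufficiently large,
`∑_{m=−2a+1}^{2a−1} H(m)² ∫_{−2πa/λ}^{2πa/λ} f³(x)|f(ω_m + x) − f(x)| dx
  ≲ (log λ)²/λ + 1/(log λ)³`, and in particular this quantity is `O(1/(log λ)³)`. -/
theorem weighted_increment_sum_bound (h : ℝ → ℝ)
    (hsym : ∀ s, h (-s) = h s)
    (hsupp : ∀ s, s ∉ Set.Icc (-(1/2) : ℝ) (1/2) → h s = 0)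
    (hsm : ContDiff ℝ 2 h)
    (f : ℝ → ℝ) (hfpos : ∀ x, 0 < f x) (hfbdd : ∃ Cf : ℝ, ∀ x, f x ≤ Cf)
    (hf3 : Integrable fun x => f x ^ 3)
    (hfdiff : Differentiable ℝ f) (hfd : ∃ Cd : ℝ, ∀ x, |deriv f x| ≤ Cd) :
    ∃ K Λ : ℝ, 0 < K ∧ 1 < Λ ∧ ∀ lam : ℝ, Λ ≤ lam → ∀ a : ℕ,
      let S : ℝ := ∑ m ∈ Finset.Icc (-2 * (a : ℤ) + 1) (2 * (a : ℤ) - 1),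
        (∫ s in (-(1/2) : ℝ)..(1/2), h s ^ 2 * Real.cos (2 * Real.pi * m * s)) ^ 2 *
          ∫ x in (-(2 * Real.pi * a / lam))..(2 * Real.pi * a / lam),
            f x ^ 3 * |f (2 * Real.pi * m / lam + x) - f x|
      S ≤ K * ((Real.log lam) ^ 2 / lam + 1 / (Real.log lam) ^ 3) ∧
      S ≤ K / (Real.log lam) ^ 3 := by
  obtain ⟨C, hCpos, hH⟩ := coeff_bound h hsupp hsm
  obtain ⟨Cf, hCf⟩ := hfbdd
  obtain ⟨Cd, hCd⟩ := hfd
  have hCf0 : 0 < Cf := lt_of_lt_of_le (hfpos 0) (hCf 0)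
  have hCd0 : 0 ≤ Cd := le_trans (abs_nonneg _) (hCd 0)
  have hfc : Continuous f := hfdiff.continuous
  set J : ℝ := ∫ x, f x ^ 3 with hJdef
  have hJ0 : 0 ≤ J := integral_nonneg (fun x => le_of_lt (pow_pos (hfpos x) 3))
  set A : ℝ := C^2 * (Cd * (2*Real.pi) * J) + 1 with hAdef
  set B : ℝ := C^2 * (2 * Cf * J) + 1 with hBdef
  have hA1 : 1 ≤ A := by
    have : (0:ℝ) ≤ C^2 * (Cd * (2*Real.pi) * J) := by positivity
    rw [hAdef]; linarith
  have hB1 : 1 ≤ B := by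
    have : (0:ℝ) ≤ C^2 * (2 * Cf * J) := by positivity
    rw [hBdef]; linarith
  set K0 : ℝ := max (3*A) (16*B) + 1 with hK0def
  have hK0pos : 0 < K0 := by
    have := le_max_left (3*A) (16*B)
    rw [hK0def]
    linarith
  refine ⟨3126 * K0, 3, by positivity, by norm_num, ?_⟩
  intro lam hlam a
  have hlam0 : (0:ℝ) < lam := by linarith
  have hlog1 : 1 ≤ Real.log lam := by
    have he : Real.exp 1 ≤ 3 := by
      have := Real.exp_one_lt_d9
      linarith
    calc (1:ℝ) = Real.log (Real.exp 1) := (Real.log_exp 1).symm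
      _ ≤ Real.log lam := Real.log_le_log (Real.exp_pos 1) (le_trans he hlam)
  have hlog0 : 0 < Real.log lam := lt_of_lt_of_le one_pos hlog1
  have h3125 : (Real.log lam)^2 / lam ≤ 3125 / (Real.log lam)^3 := by
    have hr : Real.log lam ≤ 5 * lam ^ ((1:ℝ)/5) := by
      have h1 : Real.log (lam ^ ((1:ℝ)/5)) = (1/5) * Real.log lam := by
        rw [Real.log_rpow hlam0]
      have h2 : Real.log (lam ^ ((1:ℝ)/5)) ≤ lam ^ ((1:ℝ)/5) - 1 :=
        Real.log_le_sub_one_of_pos (Real.rpow_pos_of_pos hlam0 _)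
      have h3 : (0:ℝ) < lam ^ ((1:ℝ)/5) := Real.rpow_pos_of_pos hlam0 _
      linarith
    have h5 : (Real.log lam)^5 ≤ 3125 * lam := by
      have hpp := pow_le_pow_left₀ (le_of_lt hlog0) hr 5
      have hrw : (5 * lam ^ ((1:ℝ)/5))^5 = 3125 * lam := by
        rw [mul_pow, ← Real.rpow_natCast (lam ^ ((1:ℝ)/5)) 5, ← Real.rpow_mul (le_of_lt hlam0)]
        norm_num
      rw [hrw] at hpp
      exact hpp
    rw [div_le_div_iff₀ hlam0 (by positivity)]
    calc (Real.log lam)^2 * (Real.log lam)^3 = (Real.log lam)^5 := by ring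
      _ ≤ 3125 * lam := h5
      _ = 3125 * lam := rfl
  set M : ℕ := ⌊Real.log lam⌋₊ with hMdef
  have hM1 : 1 ≤ M := Nat.le_floor (by exact_mod_cast hlog1)
  have hMle : (M:ℝ) ≤ Real.log lam := Nat.floor_le (le_of_lt hlog0)
  have hMgt : Real.log lam < M + 1 := Nat.lt_floor_add_one _
  have hM1' : (1:ℝ) ≤ (M:ℝ) := by exact_mod_cast hM1
  have hlog2M : Real.log lam ≤ 2 * M := by linarith
  set L : ℝ := 2 * Real.pi * a / lam with hLdef
  have hL0 : 0 ≤ L := by positivity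
  -- integral facts
  have hcont : ∀ ω : ℝ, Continuous (fun x => f x ^ 3 * |f (ω + x) - f x|) := by
    intro ω
    exact (hfc.pow 3).mul (((hfc.comp (continuous_const.add continuous_id)).sub hfc).abs)
  have hint : ∀ ω : ℝ, IntervalIntegrable (fun x => f x ^ 3 * |f (ω + x) - f x|) volume (-L) L :=
    fun ω => (hcont ω).intervalIntegrable _ _
  have hInn : ∀ ω : ℝ, 0 ≤ ∫ x in (-L)..L, f x ^ 3 * |f (ω + x) - f x| := by
    intro ω
    apply intervalIntegral.integral_nonneg (by linarith)
    intro u _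
    exact mul_nonneg (le_of_lt (pow_pos (hfpos u) 3)) (abs_nonneg _)
  have hIbase : ∀ (ω c : ℝ), 0 ≤ c → (∀ x, |f (ω + x) - f x| ≤ c) →
      (∫ x in (-L)..L, f x ^ 3 * |f (ω + x) - f x|) ≤ c * J := by
    intro ω c hc hbound
    have step1 : (∫ x in (-L)..L, f x ^ 3 * |f (ω + x) - f x|)
        ≤ ∫ x in (-L)..L, f x ^ 3 * c := by
      apply intervalIntegral.integral_mono_on (by linarith) (hint ω)
        (((hfc.pow 3).mul continuous_const).intervalIntegrable _ _)
      intro x _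
      exact mul_le_mul_of_nonneg_left (hbound x) (le_of_lt (pow_pos (hfpos x) 3))
    have step2 : (∫ x in (-L)..L, f x ^ 3 * c) = (∫ x in (-L)..L, f x ^ 3) * c :=
      intervalIntegral.integral_mul_const _ _
    have step3 : (∫ x in (-L)..L, f x ^ 3) ≤ J := by
      rw [intervalIntegral.integral_of_le (by linarith : -L ≤ L)]
      exact setIntegral_le_integral hf3 (Filter.Eventually.of_forall (fun x => le_of_lt (pow_pos (hfpos x) 3)))
    have step4 : (∫ x in (-L)..L, f x ^ 3) * c ≤ J * c :=
      mul_le_mul_of_nonneg_right step3 hc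
    calc (∫ x in (-L)..L, f x ^ 3 * |f (ω + x) - f x|) ≤ ∫ x in (-L)..L, f x ^ 3 * c := step1
      _ = (∫ x in (-L)..L, f x ^ 3) * c := step2
      _ ≤ J * c := step4
      _ = c * J := mul_comm _ _
  have hLip : ∀ y x : ℝ, |f y - f x| ≤ Cd * |y - x| := by
    intro y x
    have := Convex.norm_image_sub_le_of_norm_deriv_le (s := Set.univ)
      (fun z _ => hfdiff z) (fun z _ => by rw [Real.norm_eq_abs]; exact hCd z)
      convex_univ (Set.mem_univ x) (Set.mem_univ y)
    simpa [Real.norm_eq_abs] using this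
  have habs : ∀ m : ℤ, |(m:ℝ)| = ((m.natAbs : ℕ) : ℝ) := by
    intro m
    rw [← Int.cast_abs, Int.abs_eq_natAbs, Int.cast_natCast]
  have hI1 : ∀ m : ℤ, (∫ x in (-L)..L, f x^3 * |f (2*Real.pi*m/lam + x) - f x|)
      ≤ Cd * (2*Real.pi*|(m:ℝ)|/lam) * J := by
    intro m
    apply hIbase _ _ (by positivity)
    intro x
    calc |f (2*Real.pi*m/lam + x) - f x| ≤ Cd * |2*Real.pi*m/lam + x - x| := hLip _ _
      _ = Cd * (2*Real.pi*|(m:ℝ)|/lam) := by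
          rw [add_sub_cancel_right, abs_div, abs_mul, abs_mul, abs_of_pos hlam0,
            abs_of_pos Real.pi_pos, abs_two]
  have hI2 : ∀ ω : ℝ, (∫ x in (-L)..L, f x^3 * |f (ω + x) - f x|) ≤ (2*Cf) * J := by
    intro ω
    apply hIbase _ _ (by positivity)
    intro x
    have h1 := hfpos (ω + x)
    have h2 := hfpos x
    have h3 := hCf (ω + x)
    have h4 := hCf x
    rw [abs_le]
    constructor <;> linarith
  -- the key estimate
  have key : (∑ m ∈ Finset.Icc (-2 * (a : ℤ) + 1) (2 * (a : ℤ) - 1),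
      (∫ s in (-(1/2) : ℝ)..(1/2), h s ^ 2 * Real.cos (2 * Real.pi * m * s)) ^ 2 *
        ∫ x in (-L)..L, f x ^ 3 * |f (2 * Real.pi * m / lam + x) - f x|)
      ≤ K0 * ((Real.log lam) ^ 2 / lam + 1 / (Real.log lam) ^ 3) := by
    have hc1nn : (0:ℝ) ≤ C^2 * (Cd * (2*Real.pi*Real.log lam/lam) * J) := by positivity
    have hbnn : (0:ℝ) ≤ C^2 * (2 * Cf * J) := by positivity
    have hsplit := sum_split (Finset.Icc (-2 * (a : ℤ) + 1) (2 * (a : ℤ) - 1))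
      (fun m => (∫ s in (-(1/2) : ℝ)..(1/2), h s ^ 2 * Real.cos (2 * Real.pi * m * s)) ^ 2 *
        ∫ x in (-L)..L, f x ^ 3 * |f (2 * Real.pi * m / lam + x) - f x|)
      M hM1 (C^2 * (Cd * (2*Real.pi*Real.log lam/lam) * J)) (C^2 * (2 * Cf * J))
      hc1nn hbnn ?_ ?_ ?_
    · refine le_trans hsplit ?_
      -- (2M+1)*c1 + b*(2/M³) ≤ K0*(log²/lam + 1/log³)
      have e1 : (2*(M:ℝ)+1) * (C^2 * (Cd * (2*Real.pi*Real.log lam/lam) * J))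
          ≤ 3*A * ((Real.log lam)^2/lam) := by
        have h2M1 : 2*(M:ℝ)+1 ≤ 3 * Real.log lam := by linarith
        have hAm : C^2 * (Cd * (2*Real.pi) * J) ≤ A := by rw [hAdef]; linarith
        have hrw : C^2 * (Cd * (2*Real.pi*Real.log lam/lam) * J)
            = (C^2 * (Cd * (2*Real.pi) * J)) * (Real.log lam/lam) := by ring
        rw [hrw]
        calc (2*(M:ℝ)+1) * ((C^2 * (Cd * (2*Real.pi) * J)) * (Real.log lam/lam))
            ≤ (3 * Real.log lam) * (A * (Real.log lam/lam)) := by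
              apply mul_le_mul h2M1 (mul_le_mul_of_nonneg_right hAm (by positivity))
                (by positivity) (by positivity)
          _ = 3*A * ((Real.log lam)^2/lam) := by ring
      have e2 : (C^2 * (2 * Cf * J)) * (2/(M:ℝ)^3) ≤ 16*B * (1/(Real.log lam)^3) := by
        have hM3 : (Real.log lam)^3 ≤ 8 * (M:ℝ)^3 := by
          calc (Real.log lam)^3 ≤ (2*(M:ℝ))^3 :=
                pow_le_pow_left₀ (le_of_lt hlog0) hlog2M 3
            _ = 8 * (M:ℝ)^3 := by ring
        have hfrac : (2:ℝ)/(M:ℝ)^3 ≤ 16/(Real.log lam)^3 := by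
          rw [div_le_div_iff₀ (by positivity) (by positivity)]
          linarith
        have hBm : C^2 * (2 * Cf * J) ≤ B := by rw [hBdef]; linarith
        calc (C^2 * (2 * Cf * J)) * (2/(M:ℝ)^3) ≤ B * (16/(Real.log lam)^3) := by
              apply mul_le_mul hBm hfrac (by positivity) (by linarith)
          _ = 16*B * (1/(Real.log lam)^3) := by ring
      have hxnn : (0:ℝ) ≤ (Real.log lam)^2/lam := by positivity
      have hynn : (0:ℝ) ≤ 1/(Real.log lam)^3 := by positivity
      have hK1 : 3*A ≤ K0 := by
        rw [hK0def]
        linarith [le_max_left (3*A) (16*B)]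
      have hK2 : 16*B ≤ K0 := by
        rw [hK0def]
        linarith [le_max_right (3*A) (16*B)]
      calc (2*(M:ℝ)+1) * (C^2 * (Cd * (2*Real.pi*Real.log lam/lam) * J))
            + (C^2 * (2 * Cf * J)) * (2/(M:ℝ)^3)
          ≤ 3*A * ((Real.log lam)^2/lam) + 16*B * (1/(Real.log lam)^3) := add_le_add e1 e2
        _ ≤ K0 * ((Real.log lam)^2/lam) + K0 * (1/(Real.log lam)^3) :=
            add_le_add (mul_le_mul_of_nonneg_right hK1 hxnn)
              (mul_le_mul_of_nonneg_right hK2 hynn)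
        _ = K0 * ((Real.log lam)^2/lam + 1/(Real.log lam)^3) := by ring
    · -- nonnegativity of each term
      intro m _
      exact mul_nonneg (sq_nonneg _) (hInn _)
    · -- small |m| bound
      intro m _ hm
      have hH2 : (∫ s in (-(1/2) : ℝ)..(1/2), h s ^ 2 * Real.cos (2 * Real.pi * m * s)) ^ 2
          ≤ C^2 := by
        rw [← sq_abs]
        exact pow_le_pow_left₀ (abs_nonneg _) ((hH m).1) 2
      have hmlog : |(m:ℝ)| ≤ Real.log lam := by
        rw [habs m]
        have : ((m.natAbs : ℕ) : ℝ) ≤ (M:ℝ) := by exact_mod_cast hm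
        linarith
      calc (∫ s in (-(1/2) : ℝ)..(1/2), h s ^ 2 * Real.cos (2 * Real.pi * m * s)) ^ 2 *
            ∫ x in (-L)..L, f x ^ 3 * |f (2 * Real.pi * m / lam + x) - f x|
          ≤ C^2 * (Cd * (2*Real.pi*|(m:ℝ)|/lam) * J) :=
            mul_le_mul hH2 (hI1 m) (hInn _) (by positivity)
        _ ≤ C^2 * (Cd * (2*Real.pi*Real.log lam/lam) * J) := by
            gcongr
    · -- large |m| bound
      intro m _ hm
      have hmne : m ≠ 0 := by omega
      have hmne' : (m:ℝ) ≠ 0 := Int.cast_ne_zero.mpr hmne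
      have hH2 : (∫ s in (-(1/2) : ℝ)..(1/2), h s ^ 2 * Real.cos (2 * Real.pi * m * s)) ^ 2
          ≤ (C/(m:ℝ)^2)^2 := by
        rw [← sq_abs]
        apply pow_le_pow_left₀ (abs_nonneg _) ((hH m).2 hmne) 2
      calc (∫ s in (-(1/2) : ℝ)..(1/2), h s ^ 2 * Real.cos (2 * Real.pi * m * s)) ^ 2 *
            ∫ x in (-L)..L, f x ^ 3 * |f (2 * Real.pi * m / lam + x) - f x|
          ≤ (C/(m:ℝ)^2)^2 * ((2*Cf) * J) :=
            mul_le_mul hH2 (hI2 _) (hInn _) (by positivity)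
        _ = (C^2 * (2 * Cf * J)) / (m:ℝ)^4 := by
            rw [div_pow]
            ring
  -- conclude
  show (∑ m ∈ Finset.Icc (-2 * (a : ℤ) + 1) (2 * (a : ℤ) - 1),
      (∫ s in (-(1/2) : ℝ)..(1/2), h s ^ 2 * Real.cos (2 * Real.pi * m * s)) ^ 2 *
        ∫ x in (-L)..L, f x ^ 3 * |f (2 * Real.pi * m / lam + x) - f x|)
      ≤ 3126 * K0 * ((Real.log lam) ^ 2 / lam + 1 / (Real.log lam) ^ 3) ∧
    (∑ m ∈ Finset.Icc (-2 * (a : ℤ) + 1) (2 * (a : ℤ) - 1),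
      (∫ s in (-(1/2) : ℝ)..(1/2), h s ^ 2 * Real.cos (2 * Real.pi * m * s)) ^ 2 *
        ∫ x in (-L)..L, f x ^ 3 * |f (2 * Real.pi * m / lam + x) - f x|)
      ≤ 3126 * K0 / (Real.log lam) ^ 3
  constructor
  · refine le_trans key ?_
    have hxy : (0:ℝ) ≤ (Real.log lam)^2/lam + 1/(Real.log lam)^3 := by positivity
    nlinarith [hK0pos]
  · refine le_trans key ?_
    have hy : (0:ℝ) ≤ 1/(Real.log lam)^3 := by positivity
    have : (Real.log lam)^2/lam + 1/(Real.log lam)^3 ≤ 3126 * (1/(Real.log lam)^3) := by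
      have h3125' : 3125/(Real.log lam)^3 = 3125 * (1/(Real.log lam)^3) := by ring
      linarith [h3125]
    calc K0 * ((Real.log lam)^2/lam + 1/(Real.log lam)^3)
        ≤ K0 * (3126 * (1/(Real.log lam)^3)) := mul_le_mul_of_nonneg_left this (le_of_lt hK0pos)
      _ = 3126 * K0 / (Real.log lam)^3 := by ring
end
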